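/- Let n ≥ 5 and let P = (Y, X, Z) be a path of length two in the augmented cube AQ_n (i.e., Y, X, Z are three distinct vertices with Y adjacent to X and X adjacent to Z). Then at most one vertex of AQ_n is simultaneously adjacent to all three of X, Y, and Z. -/

import Mathlib

/-- Flip the single bit at index `i` (paper bit `i+1`), i.e. the map `X ↦ X_{i+1}`. -/
def flipBit {n : ℕ} (i : Fin n) (X : Fin n → Bool) : Fin n → Bool :=
  fun j => if j = i then !(X j) else X j

/-- Flip all bits at indices `≤ i` (paper bits `i+1, i, …, 1`), i.e. the map `X ↦ X̄_{i+1}`. -/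
def flipDown {n : ℕ} (i : Fin n) (X : Fin n → Bool) : Fin n → Bool :=
  fun j => if j ≤ i then !(X j) else X j

lemma flipBit_flipBit {n : ℕ} (i : Fin n) (X : Fin n → Bool) :
    flipBit i (flipBit i X) = X := by
  funext j; by_cases h : j = i <;> simp [flipBit, h]

lemma flipDown_flipDown {n : ℕ} (i : Fin n) (X : Fin n → Bool) :
    flipDown i (flipDown i X) = X := by
  funext j; by_cases h : j ≤ i <;> simp [flipDown, h]

/-- The augmented cube `AQ_n`: vertices are `n`-bit strings; two distinct vertices `X, Y`
are adjacent iff `Y = X_i` for some `1 ≤ i ≤ n` (a hypercube edge) or `Y = X̄_i` for some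
`2 ≤ i ≤ n` (a complement edge).  Paper bit `i` corresponds to index `i - 1 : Fin n`. -/
def augCube (n : ℕ) : SimpleGraph (Fin n → Bool) where
  Adj X Y := X ≠ Y ∧
    ((∃ i : Fin n, Y = flipBit i X) ∨ (∃ i : Fin n, 1 ≤ i.val ∧ Y = flipDown i X))
  symm := ⟨by
    rintro X Y ⟨hne, h⟩
    refine ⟨hne.symm, ?_⟩
    rcases h with ⟨i, rfl⟩ | ⟨i, hi, rfl⟩
    · exact Or.inl ⟨i, (flipBit_flipBit i X).symm⟩
    · exact Or.inr ⟨i, hi, (flipDown_flipDown i X).symm⟩⟩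
  loopless := ⟨fun X h => h.1 rfl⟩

/-- code vector: even code `2m` is `down m`, odd code `2i-1` is `unit i`. -/
def vecc (n c : ℕ) (j : Fin n) : Bool :=
  if c % 2 = 0 then decide (2 * j.val ≤ c) else decide (2 * j.val = c + 1)

lemma vecc_unit {n : ℕ} (i j : Fin n) :
    vecc n (if i.val = 0 then 0 else 2 * i.val - 1) j = decide (j = i) := by
  unfold vecc
  rcases Nat.eq_zero_or_pos i.val with h0 | h0
  · rw [if_pos h0, if_pos (by norm_num), decide_eq_decide]
    rw [Fin.ext_iff]; omega
  · rw [if_neg (by omega : ¬ i.val = 0)]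
    rw [if_neg (by omega : ¬ (2 * i.val - 1) % 2 = 0), decide_eq_decide]
    rw [Fin.ext_iff]; omega

lemma vecc_down {n : ℕ} (i j : Fin n) :
    vecc n (2 * i.val) j = decide (j ≤ i) := by
  unfold vecc
  rw [if_pos (by omega), decide_eq_decide, Fin.le_def]; omega

lemma flipBit_eq {n : ℕ} (i : Fin n) (X : Fin n → Bool) (j : Fin n) :
    flipBit i X j = xor (X j) (decide (j = i)) := by
  by_cases h : j = i <;> simp [flipBit, h]

lemma flipDown_eq {n : ℕ} (i : Fin n) (X : Fin n → Bool) (j : Fin n) :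
    flipDown i X j = xor (X j) (decide (j ≤ i)) := by
  by_cases h : j ≤ i <;> simp [flipDown, h]

lemma adj_iff {n : ℕ} (X Y : Fin n → Bool) :
    (augCube n).Adj X Y ↔ ∃ c, c < 2 * n - 1 ∧ ∀ j, Y j = xor (X j) (vecc n c j) := by
  constructor
  · rintro ⟨hne, ⟨i, rfl⟩ | ⟨i, hi, rfl⟩⟩
    · refine ⟨if i.val = 0 then 0 else 2 * i.val - 1, ?_, ?_⟩
      · have := i.isLt; split <;> omega
      · intro j; rw [vecc_unit, flipBit_eq]
    · refine ⟨2 * i.val, by have := i.isLt; omega, ?_⟩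
      intro j; rw [vecc_down, flipDown_eq]
  · rintro ⟨c, hc, h⟩
    have hn1 : 1 ≤ n := by omega
    rcases Nat.even_or_odd c with he | ho
    · have hce : c % 2 = 0 := Nat.even_iff.mp he
      set i : Fin n := ⟨c / 2, by omega⟩ with hi
      have hvec : ∀ j, vecc n c j = decide (j ≤ i) := by
        intro j
        have : c = 2 * i.val := by simp [hi]; omega
        rw [this, vecc_down]
      have hY : Y = flipDown i X := by
        funext j; rw [h j, hvec j, flipDown_eq]
      have hne : X ≠ Y := by
        intro hXY
        have := h i
        rw [← hXY, hvec i] at this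
        simp at this
      rcases Nat.eq_zero_or_pos (c / 2) with h0 | h0
      · refine ⟨hne, Or.inl ⟨i, ?_⟩⟩
        rw [hY]
        funext j
        rw [flipBit_eq, flipDown_eq]
        congr 1
        rw [decide_eq_decide, Fin.le_def, Fin.ext_iff]
        simp [hi]; omega
      · exact ⟨hne, Or.inr ⟨i, by simp [hi]; omega, hY⟩⟩
    · have hco : c % 2 = 1 := Nat.odd_iff.mp ho
      have hlt : (c + 1) / 2 < n := by omega
      set i : Fin n := ⟨(c + 1) / 2, hlt⟩ with hi
      have hvec : ∀ j, vecc n c j = decide (j = i) := by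
        intro j
        have hcode : c = if i.val = 0 then 0 else 2 * i.val - 1 := by
          rw [if_neg (by simp [hi]; omega)]; simp [hi]; omega
        rw [hcode, vecc_unit]
      have hne : X ≠ Y := by
        intro hXY
        have := h i
        rw [← hXY, hvec i] at this
        simp at this
      exact ⟨hne, Or.inl ⟨i, funext fun j => by rw [h j, hvec j, flipBit_eq]⟩⟩

lemma vecc_iff_even {n c : ℕ} (hc : c % 2 = 0) (j : Fin n) :
    vecc n c j = true ↔ 2 * j.val ≤ c := by
  unfold vecc; rw [if_pos hc]; simp

lemma vecc_iff_odd {n c : ℕ} (hc : c % 2 = 1) (j : Fin n) :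
    vecc n c j = true ↔ 2 * j.val = c + 1 := by
  unfold vecc; rw [if_neg (by omega)]; simp

set_option maxHeartbeats 3200000 in
lemma classify {n : ℕ} (c c' c'' : ℕ) (hc : c < 2 * n - 1) (hc' : c' < 2 * n - 1)
    (hc'' : c'' < 2 * n - 1) (hne : c ≠ c')
    (h : ∀ j : Fin n, vecc n c'' j = xor (vecc n c j) (vecc n c' j)) :
    (c + 1 = c' ∨ c' + 1 = c) ∨
      ((c + 2 = c' ∨ c' + 2 = c) ∧ c % 2 = 0 ∧ c' % 2 = 0) := by
  have key : ∀ j : Fin n,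
      ((vecc n c'' j = true) ↔ ¬ ((vecc n c j = true) ↔ (vecc n c' j = true))) := by
    intro j
    rw [h j]
    cases vecc n c j <;> cases vecc n c' j <;> simp
  rcases Nat.mod_two_eq_zero_or_one c with pc | pc <;>
    rcases Nat.mod_two_eq_zero_or_one c' with pc' | pc' <;>
      rcases Nat.mod_two_eq_zero_or_one c'' with pc'' | pc''
  · -- EEE
    have h0 := key ⟨0, by omega⟩
    rw [vecc_iff_even pc'', vecc_iff_even pc, vecc_iff_even pc'] at h0
    simp only [Fin.val_mk] at h0
    omega
  · -- EEO
    have H : ∀ m, m < n → ((2 * m = c'' + 1) ↔ ¬ ((2 * m ≤ c) ↔ (2 * m ≤ c'))) := by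
      intro m hm
      have := key ⟨m, hm⟩
      rwa [vecc_iff_odd pc'', vecc_iff_even pc, vecc_iff_even pc'] at this
    have h2 := H (c / 2 + 1)
    have h3 := H (c / 2 + 2)
    have h5 := H (c' / 2 + 1)
    have h6 := H (c' / 2 + 2)
    omega
  · -- EOE
    have H : ∀ m, m < n → ((2 * m ≤ c'') ↔ ¬ ((2 * m ≤ c) ↔ (2 * m = c' + 1))) := by
      intro m hm
      have := key ⟨m, hm⟩
      rwa [vecc_iff_even pc'', vecc_iff_even pc, vecc_iff_odd pc'] at this
    have h2 := H (c / 2 + 1)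
    have h3 := H (c / 2 + 2)
    have h5 := H (c' / 2 + 1)
    have h8 := H (c'' / 2 + 1)
    have h9 := H (c'' / 2 + 2)
    omega
  · -- EOO
    have h0 := key ⟨0, by omega⟩
    rw [vecc_iff_odd pc'', vecc_iff_even pc, vecc_iff_odd pc'] at h0
    simp only [Fin.val_mk] at h0
    omega
  · -- OEE
    have H : ∀ m, m < n → ((2 * m ≤ c'') ↔ ¬ ((2 * m = c + 1) ↔ (2 * m ≤ c'))) := by
      intro m hm
      have := key ⟨m, hm⟩
      rwa [vecc_iff_even pc'', vecc_iff_odd pc, vecc_iff_even pc'] at this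
    have h2 := H (c' / 2 + 1)
    have h3 := H (c' / 2 + 2)
    have h5 := H (c / 2 + 1)
    have h8 := H (c'' / 2 + 1)
    have h9 := H (c'' / 2 + 2)
    omega
  · -- OEO
    have h0 := key ⟨0, by omega⟩
    rw [vecc_iff_odd pc'', vecc_iff_odd pc, vecc_iff_even pc'] at h0
    simp only [Fin.val_mk] at h0
    omega
  · -- OOE
    have h0 := key ⟨0, by omega⟩
    rw [vecc_iff_even pc'', vecc_iff_odd pc, vecc_iff_odd pc'] at h0
    simp only [Fin.val_mk] at h0
    omega
  · -- OOO
    have H : ∀ m, m < n → ((2 * m = c'' + 1) ↔ ¬ ((2 * m = c + 1) ↔ (2 * m = c' + 1))) := by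
      intro m hm
      have := key ⟨m, hm⟩
      rwa [vecc_iff_odd pc'', vecc_iff_odd pc, vecc_iff_odd pc'] at this
    have h1 := H (c / 2 + 1)
    have h2 := H (c' / 2 + 1)
    omega

lemma bool1 (w x y a b p : Bool) (h1 : x = xor w a) (h2 : x = xor y p) (h3 : y = xor w b) :
    b = xor a p := by
  subst h1 h3; cases w <;> cases a <;> cases b <;> cases p <;> simp_all

lemma bool2 (w x z a c q : Bool) (h1 : x = xor w a) (h2 : z = xor x q) (h3 : z = xor w c) :
    c = xor a q := by
  subst h1 h2; cases w <;> cases a <;> cases c <;> cases q <;> simp_all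

lemma bool3 (w w' v : Bool) (h : xor w v = xor w' v) : w = w' := by
  cases w <;> cases w' <;> cases v <;> simp_all

set_option maxHeartbeats 1600000 in
/-- Let `n ≥ 5` and let `P = (Y, X, Z)` be a path of length two in `AQ_n`.  Then at most
one vertex of `AQ_n` is simultaneously adjacent to all three of `X`, `Y` and `Z`. -/
theorem augCube_path_common_neighbor_le_one (n : ℕ) (hn : 5 ≤ n) (X Y Z : Fin n → Bool)
    (hYZ : Y ≠ Z) (hYX : (augCube n).Adj Y X) (hXZ : (augCube n).Adj X Z) :
    {W | (augCube n).Adj W X ∧ (augCube n).Adj W Y ∧ (augCube n).Adj W Z}.ncard ≤ 1 := by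
  rw [Set.ncard_le_one_iff (Set.toFinite _)]
  rintro W W' ⟨hWX, hWY, hWZ⟩ ⟨hW'X, hW'Y, hW'Z⟩
  obtain ⟨cp, hcp, hp⟩ := adj_iff Y X |>.mp hYX
  obtain ⟨cq, hcq, hq⟩ := adj_iff X Z |>.mp hXZ
  obtain ⟨ca, hca, ha⟩ := adj_iff W X |>.mp hWX
  obtain ⟨cb, hcb, hb⟩ := adj_iff W Y |>.mp hWY
  obtain ⟨cc, hcc, hcz⟩ := adj_iff W Z |>.mp hWZ
  obtain ⟨ca', hca', ha'⟩ := adj_iff W' X |>.mp hW'X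
  obtain ⟨cb', hcb', hb'⟩ := adj_iff W' Y |>.mp hW'Y
  obtain ⟨cc', hcc', hcz'⟩ := adj_iff W' Z |>.mp hW'Z
  -- xor combination identities
  have Hb : ∀ j, vecc n cb j = xor (vecc n ca j) (vecc n cp j) :=
    fun j => bool1 (W j) (X j) (Y j) _ _ _ (ha j) (hp j) (hb j)
  have Hc : ∀ j, vecc n cc j = xor (vecc n ca j) (vecc n cq j) :=
    fun j => bool2 (W j) (X j) (Z j) _ _ _ (ha j) (hq j) (hcz j)
  have Hb' : ∀ j, vecc n cb' j = xor (vecc n ca' j) (vecc n cp j) :=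
    fun j => bool1 (W' j) (X j) (Y j) _ _ _ (ha' j) (hp j) (hb' j)
  have Hc' : ∀ j, vecc n cc' j = xor (vecc n ca' j) (vecc n cq j) :=
    fun j => bool2 (W' j) (X j) (Z j) _ _ _ (ha' j) (hq j) (hcz' j)
  -- distinctness of codes
  have hap : ca ≠ cp := by
    rintro rfl
    exact hWY.ne (funext fun j => by
      have h1 := ha j; have h2 := hp j
      cases hW : W j <;> cases hY : Y j <;> cases hX : X j <;> simp_all)
  have haq : ca ≠ cq := by
    rintro rfl
    exact hWZ.ne (funext fun j => by
      have h1 := ha j; have h2 := hq j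
      cases hW : W j <;> cases hZ : Z j <;> cases hX : X j <;> simp_all)
  have hap' : ca' ≠ cp := by
    rintro rfl
    exact hW'Y.ne (funext fun j => by
      have h1 := ha' j; have h2 := hp j
      cases hW : W' j <;> cases hY : Y j <;> cases hX : X j <;> simp_all)
  have haq' : ca' ≠ cq := by
    rintro rfl
    exact hW'Z.ne (funext fun j => by
      have h1 := ha' j; have h2 := hq j
      cases hW : W' j <;> cases hZ : Z j <;> cases hX : X j <;> simp_all)
  have hpq : cp ≠ cq := by
    rintro rfl
    exact hYZ (funext fun j => by
      have h1 := hp j; have h2 := hq j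
      cases hY : Y j <;> cases hZ : Z j <;> cases hX : X j <;> simp_all)
  have R1 := classify ca cp cb hca hcp hcb hap Hb
  have R2 := classify ca cq cc hca hcq hcc haq Hc
  have R3 := classify ca' cp cb' hca' hcp hcb' hap' Hb'
  have R4 := classify ca' cq cc' hca' hcq hcc' haq' Hc'
  have hgoal : ca = ca' := by omega
  subst hgoal
  funext j
  exact bool3 _ _ _ ((ha j).symm.trans (ha' j))
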